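/- There exists a constant C > 0 independent of ε such that for all sufficiently small ε > 0 the restriction of the boundary datum U to Ω∖∪_i 𝒫_i^ε is admissible and satisfies ℰ_ε[U] ≤ C; consequently, any minimizer u_ε of ℰ_ε among admissible functions satisfies ℰ_ε[u_ε] ≤ C uniformly in ε. -/

import Mathlib

open MeasureTheory Filter Metric Set
open scoped RealInnerProductSpace ENNReal NNReal Topology

noncomputable section

/-- Euclidean three-space. -/
abbrev E3 : Type := EuclideanSpace ℝ (Fin 3)

/-- The closed prolate spheroid centered at the origin with semi-axis `A` along the
`x`- and `y`-directions and semi-axis `B` along the `z`-direction. -/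
def sph (A B : ℝ) : Set E3 :=
  {x : E3 | (x 0) ^ 2 / A ^ 2 + (x 1) ^ 2 / A ^ 2 + (x 2) ^ 2 / B ^ 2 ≤ 1}

/-- The boundary surface of the spheroid `sph A B`. -/
def sphS (A B : ℝ) : Set E3 :=
  {x : E3 | (x 0) ^ 2 / A ^ 2 + (x 1) ^ 2 / A ^ 2 + (x 2) ^ 2 / B ^ 2 = 1}

/-- Gradient of the defining function of the spheroid (up to a factor `2`). -/
def sphGrad (A B : ℝ) (x : E3) : E3 :=
  (WithLp.equiv 2 (Fin 3 → ℝ)).symm ![x 0 / A ^ 2, x 1 / A ^ 2, x 2 / B ^ 2]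

/-- Outward unit normal to the surface of the spheroid `sph A B`. -/
def sphN (A B : ℝ) (x : E3) : E3 := ‖sphGrad A B x‖⁻¹ • sphGrad A B x

/-- A rotation of `ℝ³`: a linear isometry with determinant one. -/
def IsRotation (R : E3 ≃ₗᵢ[ℝ] E3) : Prop :=
  LinearMap.det (R.toLinearEquiv : E3 →ₗ[ℝ] E3) = 1

/-- A particle: the image of the reference spheroid `sph A B` under `y ↦ c + s • R y`. -/
def part (A B : ℝ) (c : E3) (s : ℝ) (R : E3 ≃ₗᵢ[ℝ] E3) : Set E3 :=
  (fun y => c + s • R y) '' sph A B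

/-- The boundary surface of a particle. -/
def partS (A B : ℝ) (c : E3) (s : ℝ) (R : E3 ≃ₗᵢ[ℝ] E3) : Set E3 :=
  (fun y => c + s • R y) '' sphS A B

/-- The outward unit normal on the surface of a particle. -/
def partN (A B : ℝ) (c : E3) (s : ℝ) (R : E3 ≃ₗᵢ[ℝ] E3) (y : E3) : E3 :=
  R (sphN A B (s⁻¹ • R.symm (y - c)))

/-- Geometric configuration of the dilute ferronematic composite from the paper:
a bounded smooth domain `Ω ⊂ ℝ³`; a reference closed prolate spheroid `𝒫 = sph b a`
with semi-minor axis `b` and semi-major axis `a` (`0 < b < a`), long axis along `z`;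
exponent `1 < α < 2`; constants `0 < d < D`, `g ∈ ℝ`; and, for each `0 < ε < ε₀`,
particles `𝒫ᵢ^ε = xᵢ^ε + ε^α Rᵢ^ε 𝒫` (`i = 1,…,N_ε`) whose centers are `dε`-separated,
at mutual distance at most `Dε`, with the closed balls of radius `dε/2` around the
centers pairwise disjoint and contained in `Ω`, and `N_ε ≤ N ε⁻³`. -/
structure Config where
  Ω : Set E3
  a : ℝ
  b : ℝ
  α : ℝ
  d : ℝ
  D : ℝ
  g : ℝ
  ε₀ : ℝ
  Nε : ℝ → ℕ
  xc : (ε : ℝ) → Fin (Nε ε) → E3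
  Rot : (ε : ℝ) → Fin (Nε ε) → E3 ≃ₗᵢ[ℝ] E3
  NN : ℝ
  hΩo : IsOpen Ω
  hΩne : Ω.Nonempty
  hΩb : Bornology.IsBounded Ω
  hb : 0 < b
  hba : b < a
  hα1 : 1 < α
  hα2 : α < 2
  hd : 0 < d
  hdD : d < D
  hε₀ : 0 < ε₀
  hRot : ∀ ε i, IsRotation (Rot ε i)
  hsep_lo : ∀ ε, 0 < ε → ε < ε₀ → ∀ i j, i ≠ j → d * ε ≤ dist (xc ε i) (xc ε j)
  hsep_hi : ∀ ε, 0 < ε → ε < ε₀ → ∀ i j, i ≠ j → dist (xc ε i) (xc ε j) ≤ D * ε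
  hdisj : ∀ ε, 0 < ε → ε < ε₀ → ∀ i j, i ≠ j →
    Disjoint (Metric.closedBall (xc ε i) (d * ε / 2)) (Metric.closedBall (xc ε j) (d * ε / 2))
  hball : ∀ ε, 0 < ε → ε < ε₀ → ∀ i, Metric.closedBall (xc ε i) (d * ε / 2) ⊆ Ω
  hNN : 0 < NN
  hcount : ∀ ε, 0 < ε → ε < ε₀ → (Nε ε : ℝ) ≤ NN * ε⁻¹ ^ 3

namespace Config

variable (cfg : Config)

/-- The `i`-th particle `𝒫ᵢ^ε`. -/
def particle (ε : ℝ) (i : Fin (cfg.Nε ε)) : Set E3 :=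
  part cfg.b cfg.a (cfg.xc ε i) (ε ^ cfg.α) (cfg.Rot ε i)

/-- The surface `∂𝒫ᵢ^ε` of the `i`-th particle. -/
def surf (ε : ℝ) (i : Fin (cfg.Nε ε)) : Set E3 :=
  partS cfg.b cfg.a (cfg.xc ε i) (ε ^ cfg.α) (cfg.Rot ε i)

/-- The outward unit normal on the surface of the `i`-th particle. -/
def normal (ε : ℝ) (i : Fin (cfg.Nε ε)) (y : E3) : E3 :=
  partN cfg.b cfg.a (cfg.xc ε i) (ε ^ cfg.α) (cfg.Rot ε i) y

/-- The perforated domain `Ω ∖ ∪ᵢ 𝒫ᵢ^ε` occupied by the liquid crystal. -/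
def dom (ε : ℝ) : Set E3 := cfg.Ω \ ⋃ i, cfg.particle ε i

/-- The anchoring surface energy `g_ε ∫_{∪ᵢ∂𝒫ᵢ^ε} (u·ν)² dσ`, `g_ε = g ε^{3−2α}`. -/
def surfE (ε : ℝ) (u : E3 → E3) : ℝ :=
  cfg.g * ε ^ (3 - 2 * cfg.α) *
    ∑ i : Fin (cfg.Nε ε), ∫ y in cfg.surf ε i, ⟪u y, cfg.normal ε i y⟫ ^ 2 ∂μH[2]

/-- The liquid crystal energy
`ℰ_ε[u] = ∫_{Ω∖∪ᵢ𝒫ᵢ^ε} (|∇u|² + (1−|u|²)²) dV + g_ε ∫_{∪ᵢ∂𝒫ᵢ^ε} (u·ν)² dσ`. -/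
def lcE (ε : ℝ) (u : E3 → E3) : ℝ :=
  (∫ x in cfg.dom ε, (‖fderiv ℝ u x‖ ^ 2 + (1 - ‖u x‖ ^ 2) ^ 2)) + cfg.surfE ε u

end Config

/-- Membership in `H¹(s; ℝ³)` (as a class of everywhere-defined representatives):
continuity, differentiability on `s`, and square integrability of the function and of
its gradient on `s`. -/
def H1on (s : Set E3) (u : E3 → E3) : Prop :=
  Continuous u ∧ (∀ x ∈ s, DifferentiableAt ℝ u x) ∧
    IntegrableOn (fun x => ‖u x‖ ^ 2) s ∧
    IntegrableOn (fun x => ‖fderiv ℝ u x‖ ^ 2) s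

/-- Admissible functions for the variational problems: `H¹` regularity on the perforated
domain (together with the `L⁴` integrability granting a finite Ginzburg–Landau term) and
the Dirichlet condition `u = U` on `∂Ω`. -/
def Config.Adm (cfg : Config) (U : E3 → E3) (ε : ℝ) (u : E3 → E3) : Prop :=
  H1on (cfg.dom ε) u ∧ IntegrableOn (fun x => ‖u x‖ ^ 4) (cfg.dom ε) ∧
    Set.EqOn u U (frontier cfg.Ω)


/-! ### Auxiliary lemmas -/

lemma aux_lipsin (x y : ℝ) : |Real.sin x - Real.sin y| ≤ |x - y| := by
  rw [Real.sin_sub_sin]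
  have h1 : |Real.sin ((x - y) / 2)| ≤ |(x - y) / 2| := Real.abs_sin_le_abs
  have h2 : |Real.cos ((x + y) / 2)| ≤ 1 := Real.abs_cos_le_one _
  rw [abs_mul, abs_mul]
  have h4 : |(x - y) / 2| = |x - y| / 2 := by rw [abs_div]; norm_num
  have h3 : |(2 : ℝ)| = 2 := by norm_num
  rw [h3]
  have := mul_le_mul h1 h2 (abs_nonneg _) (abs_nonneg _)
  rw [h4] at this
  nlinarith

lemma aux_lipcos (x y : ℝ) : |Real.cos x - Real.cos y| ≤ |x - y| := by
  rw [Real.cos_sub_cos]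
  have h1 : |Real.sin ((x - y) / 2)| ≤ |(x - y) / 2| := Real.abs_sin_le_abs
  have h2 : |Real.sin ((x + y) / 2)| ≤ 1 := Real.abs_sin_le_one _
  rw [abs_mul, abs_mul]
  have h4 : |(x - y) / 2| = |x - y| / 2 := by rw [abs_div]; norm_num
  have h3 : |(-2 : ℝ)| = 2 := by norm_num
  rw [h3]
  have := mul_le_mul h2 h1 (abs_nonneg _) (by norm_num)
  rw [h4] at this
  nlinarith

lemma aux_trig_prod (f : ℝ → ℝ) (hf1 : ∀ t, |f t| ≤ 1) (hf : ∀ s t, |f s - f t| ≤ |s - t|)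
    (θ θ' φ φ' : ℝ) : |f θ * Real.sin φ - f θ' * Real.sin φ'| ≤ |θ - θ'| + |φ - φ'| := by
  have e : f θ * Real.sin φ - f θ' * Real.sin φ'
      = (f θ - f θ') * Real.sin φ + f θ' * (Real.sin φ - Real.sin φ') := by ring
  rw [e]
  calc |(f θ - f θ') * Real.sin φ + f θ' * (Real.sin φ - Real.sin φ')|
      ≤ |(f θ - f θ') * Real.sin φ| + |f θ' * (Real.sin φ - Real.sin φ')| := abs_add_le _ _
    _ ≤ |θ - θ'| + |φ - φ'| := by
        rw [abs_mul, abs_mul]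
        have := hf θ θ'
        have := hf1 θ'
        have := Real.abs_sin_le_one φ
        have := aux_lipsin φ φ'
        nlinarith [abs_nonneg (f θ - f θ'), abs_nonneg (Real.sin φ - Real.sin φ'),
          abs_nonneg (f θ'), abs_nonneg (Real.sin φ)]

/-- Spherical-coordinate parametrization of the spheroid surface. -/
def sphMap (A B : ℝ) (p : Fin 2 → ℝ) : E3 :=
  (WithLp.equiv 2 (Fin 3 → ℝ)).symm
    ![A * (Real.cos (p 0) * Real.sin (p 1)), A * (Real.sin (p 0) * Real.sin (p 1)),
      B * Real.cos (p 1)]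

lemma aux_sphMap_lip {A B : ℝ} (hA : 0 < A) (hAB : A < B) :
    LipschitzWith (3 * B).toNNReal (sphMap A B) := by
  apply LipschitzWith.of_dist_le_mul
  intro p q
  rw [Real.coe_toNNReal _ (by linarith : (0:ℝ) ≤ 3 * B)]
  set D := dist p q with hD
  have hD0 : 0 ≤ D := dist_nonneg
  have h0 : |p 0 - q 0| ≤ D := by
    have := dist_le_pi_dist p q 0; rwa [Real.dist_eq] at this
  have h1 : |p 1 - q 1| ≤ D := by
    have := dist_le_pi_dist p q 1; rwa [Real.dist_eq] at this
  rw [EuclideanSpace.dist_eq]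
  have e0 : ∀ i : Fin 3, dist (sphMap A B p i) (sphMap A B q i)
      = |sphMap A B p i - sphMap A B q i| := fun i => Real.dist_eq _ _
  have c0 : |sphMap A B p 0 - sphMap A B q 0| ≤ 2 * B * D := by
    show |A * (Real.cos (p 0) * Real.sin (p 1)) - A * (Real.cos (q 0) * Real.sin (q 1))| ≤ _
    rw [← mul_sub, abs_mul, abs_of_pos hA]
    have := aux_trig_prod Real.cos (fun t => Real.abs_cos_le_one t) aux_lipcos (p 0) (q 0) (p 1) (q 1)
    nlinarith [abs_nonneg (Real.cos (p 0) * Real.sin (p 1) - Real.cos (q 0) * Real.sin (q 1))]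
  have c1 : |sphMap A B p 1 - sphMap A B q 1| ≤ 2 * B * D := by
    show |A * (Real.sin (p 0) * Real.sin (p 1)) - A * (Real.sin (q 0) * Real.sin (q 1))| ≤ _
    rw [← mul_sub, abs_mul, abs_of_pos hA]
    have := aux_trig_prod Real.sin (fun t => Real.abs_sin_le_one t) aux_lipsin (p 0) (q 0) (p 1) (q 1)
    nlinarith [abs_nonneg (Real.sin (p 0) * Real.sin (p 1) - Real.sin (q 0) * Real.sin (q 1))]
  have c2 : |sphMap A B p 2 - sphMap A B q 2| ≤ B * D := by
    show |B * Real.cos (p 1) - B * Real.cos (q 1)| ≤ _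
    rw [← mul_sub, abs_mul, abs_of_pos (hA.trans hAB)]
    have := aux_lipcos (p 1) (q 1)
    nlinarith
  rw [Fin.sum_univ_three, e0 0, e0 1, e0 2]
  have key : |sphMap A B p 0 - sphMap A B q 0| ^ 2 + |sphMap A B p 1 - sphMap A B q 1| ^ 2
      + |sphMap A B p 2 - sphMap A B q 2| ^ 2 ≤ (3 * B * D) ^ 2 := by
    nlinarith [abs_nonneg (sphMap A B p 0 - sphMap A B q 0),
      abs_nonneg (sphMap A B p 1 - sphMap A B q 1),
      abs_nonneg (sphMap A B p 2 - sphMap A B q 2), hD0, hA.le, hAB.le,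
      mul_nonneg (mul_nonneg (by norm_num : (0:ℝ) ≤ 2) (hA.trans hAB).le) hD0]
  calc Real.sqrt (|sphMap A B p 0 - sphMap A B q 0| ^ 2 + |sphMap A B p 1 - sphMap A B q 1| ^ 2
        + |sphMap A B p 2 - sphMap A B q 2| ^ 2) ≤ Real.sqrt ((3 * B * D) ^ 2) := by
        apply Real.sqrt_le_sqrt; linarith
    _ = 3 * B * D := Real.sqrt_sq (by nlinarith)

lemma aux_sphS_subset {A B : ℝ} (hA : 0 < A) (hB : 0 < B) :
    sphS A B ⊆ sphMap A B '' (Metric.closedBall 0 4) := by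
  intro x hx
  have hx' : (x 0) ^ 2 / A ^ 2 + (x 1) ^ 2 / A ^ 2 + (x 2) ^ 2 / B ^ 2 = 1 := hx
  set t : ℝ := x 2 / B with ht
  have ht2 : t ^ 2 ≤ 1 := by
    have h0 : 0 ≤ (x 0) ^ 2 / A ^ 2 := by positivity
    have h1 : 0 ≤ (x 1) ^ 2 / A ^ 2 := by positivity
    have : t ^ 2 = (x 2) ^ 2 / B ^ 2 := by rw [ht, div_pow]
    linarith [this]
  have ht1 : -1 ≤ t ∧ t ≤ 1 := abs_le.mp (abs_le_one_iff_mul_self_le_one.mpr (by nlinarith))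
  set φ := Real.arccos t with hφ
  set z : ℂ := ⟨x 0 / A, x 1 / A⟩ with hz
  have hre : z.re = x 0 / A := rfl
  have him : z.im = x 1 / A := rfl
  have habs : ‖z‖ = Real.sin φ := by
    rw [hφ, Real.sin_arccos]
    rw [Complex.norm_def, Complex.normSq_apply, hre, him]
    congr 1
    rw [ht]
    field_simp at hx' ⊢
    nlinarith [hx']
  set θ := z.arg with hθ
  refine ⟨![θ, φ], ?_, ?_⟩
  · rw [Metric.mem_closedBall, dist_zero_right]
    rw [pi_norm_le_iff_of_nonneg (by norm_num)]
    intro i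
    fin_cases i
    · show |θ| ≤ 4
      calc |θ| ≤ Real.pi := Complex.abs_arg_le_pi z
        _ ≤ 4 := Real.pi_le_four
    · show |φ| ≤ 4
      have h1 : 0 ≤ φ := Real.arccos_nonneg t
      have h2 : φ ≤ Real.pi := Real.arccos_le_pi t
      rw [abs_of_nonneg h1]
      linarith [Real.pi_le_four]
  · refine PiLp.ext fun i => ?_
    fin_cases i
    · show A * (Real.cos θ * Real.sin φ) = x 0
      by_cases hz0 : z = 0
      · have h5 : Real.sin φ = 0 := by rw [← habs, hz0]; simp
        have hx0 : x 0 = 0 := by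
          have h6 : z.re = 0 := by rw [hz0]; rfl
          rw [hre] at h6
          field_simp at h6; simpa using h6
        rw [h5, hx0]; ring
      · rw [hθ, Complex.cos_arg hz0, habs, hre]
        have hs0 : Real.sin φ ≠ 0 := by rw [← habs]; simpa using hz0
        field_simp
    · show A * (Real.sin θ * Real.sin φ) = x 1
      by_cases hz0 : ‖z‖ = 0
      · have h5 : Real.sin φ = 0 := by rw [← habs, hz0]
        have hx1 : x 1 = 0 := by
          have h6 : z.im = 0 := by
            have := norm_eq_zero.mp hz0
            rw [this]; rfl
          rw [him] at h6
          field_simp at h6; simpa using h6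
        rw [h5, hx1]; ring
      · rw [hθ, Complex.sin_arg, habs, him]
        have hs0 : Real.sin φ ≠ 0 := by rwa [← habs]
        field_simp
    · show B * Real.cos φ = x 2
      rw [hφ, Real.cos_arccos ht1.1 ht1.2, ht]
      field_simp

lemma aux_sphS_lt_top {A B : ℝ} (hA : 0 < A) (hAB : A < B) : μH[(2:ℝ)] (sphS A B) < ⊤ := by
  have h1 : μH[(2:ℝ)] (sphS A B) ≤ μH[(2:ℝ)] (sphMap A B '' (Metric.closedBall 0 4)) :=
    measure_mono (aux_sphS_subset hA (hA.trans hAB))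
  have h2 := (aux_sphMap_lip hA hAB).hausdorffMeasure_image_le (by norm_num : (0:ℝ) ≤ 2)
    (Metric.closedBall 0 4)
  have h3 : (μH[(2:ℝ)] : Measure (Fin 2 → ℝ)) = volume := by
    have := MeasureTheory.hausdorffMeasure_pi_real (ι := Fin 2)
    simpa using this
  refine lt_of_le_of_lt (h1.trans h2) ?_
  rw [h3]
  exact ENNReal.mul_lt_top
    (ENNReal.rpow_lt_top_of_nonneg (by norm_num : (0:ℝ) ≤ 2) ENNReal.coe_ne_top)
    (isCompact_closedBall 0 4).measure_lt_top

lemma aux_lip_aff (c : E3) (s : ℝ) (hs : 0 ≤ s) (R : E3 ≃ₗᵢ[ℝ] E3) :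
    LipschitzWith s.toNNReal (fun y : E3 => c + s • R y) := by
  apply LipschitzWith.of_dist_le_mul
  intro x y
  rw [Real.coe_toNNReal _ hs, dist_eq_norm, dist_eq_norm]
  have h : c + s • R x - (c + s • R y) = s • (R x - R y) := by module
  rw [h, norm_smul, Real.norm_eq_abs, abs_of_nonneg hs, ← map_sub, R.norm_map]

lemma aux_partS_meas_le {A B : ℝ} (c : E3) {s : ℝ} (hs : 0 ≤ s)
    (R : E3 ≃ₗᵢ[ℝ] E3) :
    μH[(2:ℝ)] (partS A B c s R) ≤ (s.toNNReal : ℝ≥0∞) ^ (2:ℝ) * μH[(2:ℝ)] (sphS A B) :=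
  (aux_lip_aff c s hs R).hausdorffMeasure_image_le (by norm_num) _

lemma aux_partS_fin {A B : ℝ} (hA : 0 < A) (hAB : A < B) (c : E3) {s : ℝ} (hs : 0 ≤ s)
    (R : E3 ≃ₗᵢ[ℝ] E3) : μH[(2:ℝ)] (partS A B c s R) < ⊤ :=
  lt_of_le_of_lt (aux_partS_meas_le c hs R)
    (ENNReal.mul_lt_top (ENNReal.rpow_lt_top_of_nonneg (by norm_num : (0:ℝ) ≤ 2)
      ENNReal.coe_ne_top) (aux_sphS_lt_top hA hAB))

lemma aux_partS_toReal_le {A B : ℝ} (hA : 0 < A) (hAB : A < B) (c : E3) {s : ℝ} (hs : 0 ≤ s)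
    (R : E3 ≃ₗᵢ[ℝ] E3) :
    (μH[(2:ℝ)] (partS A B c s R)).toReal ≤ s ^ 2 * (μH[(2:ℝ)] (sphS A B)).toReal := by
  have hfin := aux_sphS_lt_top hA hAB
  have h := aux_partS_meas_le (A := A) (B := B) c hs R
  have hne : (s.toNNReal : ℝ≥0∞) ^ (2:ℝ) * μH[(2:ℝ)] (sphS A B) ≠ ⊤ :=
    (ENNReal.mul_lt_top (ENNReal.rpow_lt_top_of_nonneg (by norm_num : (0:ℝ) ≤ 2)
      ENNReal.coe_ne_top) hfin).ne
  have h2 := ENNReal.toReal_mono hne h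
  refine h2.trans (le_of_eq ?_)
  rw [ENNReal.toReal_mul]
  congr 1
  rw [show (2:ℝ) = ((2:ℕ):ℝ) by norm_num, ENNReal.rpow_natCast, ENNReal.toReal_pow,
    ENNReal.coe_toReal, Real.coe_toNNReal _ hs]

lemma aux_sph_subset {A B : ℝ} (hA : 0 < A) (hAB : A < B) :
    sph A B ⊆ Metric.closedBall 0 B := by
  intro x hx
  have hx' : (x 0) ^ 2 / A ^ 2 + (x 1) ^ 2 / A ^ 2 + (x 2) ^ 2 / B ^ 2 ≤ 1 := hx
  rw [mem_closedBall_zero_iff, EuclideanSpace.norm_eq, Fin.sum_univ_three]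
  have e : ∀ i : Fin 3, ‖x i‖ ^ 2 = x i ^ 2 := fun i => by rw [Real.norm_eq_abs, sq_abs]
  rw [e 0, e 1, e 2]
  have h0 : x 0 ^ 2 = (x 0 ^ 2 / A ^ 2) * A ^ 2 :=
    (div_mul_cancel₀ _ (pow_ne_zero 2 hA.ne')).symm
  have h1 : x 1 ^ 2 = (x 1 ^ 2 / A ^ 2) * A ^ 2 :=
    (div_mul_cancel₀ _ (pow_ne_zero 2 hA.ne')).symm
  have h2 : x 2 ^ 2 = (x 2 ^ 2 / B ^ 2) * B ^ 2 :=
    (div_mul_cancel₀ _ (pow_ne_zero 2 (hA.trans hAB).ne')).symm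
  have u0 : 0 ≤ x 0 ^ 2 / A ^ 2 := by positivity
  have u1 : 0 ≤ x 1 ^ 2 / A ^ 2 := by positivity
  have u2 : 0 ≤ x 2 ^ 2 / B ^ 2 := by positivity
  have hAB2 : A ^ 2 ≤ B ^ 2 := by nlinarith
  have hsum : x 0 ^ 2 + x 1 ^ 2 + x 2 ^ 2 ≤ B ^ 2 := by nlinarith
  calc Real.sqrt (x 0 ^ 2 + x 1 ^ 2 + x 2 ^ 2) ≤ Real.sqrt (B ^ 2) := Real.sqrt_le_sqrt hsum
    _ = B := Real.sqrt_sq (hA.trans hAB).le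

lemma aux_part_subset {A B : ℝ} (hA : 0 < A) (hAB : A < B) (c : E3) {s : ℝ} (hs : 0 ≤ s)
    (R : E3 ≃ₗᵢ[ℝ] E3) : part A B c s R ⊆ Metric.closedBall c (s * B) := by
  rintro _ ⟨y, hy, rfl⟩
  rw [Metric.mem_closedBall]
  have h : dist (c + s • R y) c = s * ‖y‖ := by
    rw [dist_eq_norm]
    have e : c + s • R y - c = s • R y := by module
    rw [e, norm_smul, Real.norm_eq_abs, abs_of_nonneg hs, R.norm_map]
  rw [h]
  exact mul_le_mul_of_nonneg_left (mem_closedBall_zero_iff.mp (aux_sph_subset hA hAB hy)) hs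

lemma aux_sphS_subset_sph (A B : ℝ) : sphS A B ⊆ sph A B := fun _ hx => le_of_eq hx

lemma aux_grad_cont (A B : ℝ) : Continuous (sphGrad A B) := by
  refine (PiLp.continuous_toLp (p := 2) (β := fun _ : Fin 3 => ℝ)).comp ?_
  refine continuous_pi fun i => ?_
  fin_cases i
  · show Continuous fun x : E3 => x 0 / A ^ 2
    exact ((continuous_apply (0 : Fin 3)).comp (PiLp.continuous_ofLp (p := 2) (β := fun _ : Fin 3 => ℝ))).div_const _
  · show Continuous fun x : E3 => x 1 / A ^ 2
    exact ((continuous_apply (1 : Fin 3)).comp (PiLp.continuous_ofLp (p := 2) (β := fun _ : Fin 3 => ℝ))).div_const _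
  · show Continuous fun x : E3 => x 2 / B ^ 2
    exact ((continuous_apply (2 : Fin 3)).comp (PiLp.continuous_ofLp (p := 2) (β := fun _ : Fin 3 => ℝ))).div_const _

lemma aux_meas_integrand (A B : ℝ) (c : E3) (s : ℝ) (R : E3 ≃ₗᵢ[ℝ] E3) (U : E3 → E3)
    (hUc : Continuous U) :
    Measurable fun y : E3 => (⟪U y, partN A B c s R y⟫) ^ 2 := by
  have hgrad : Continuous (sphGrad A B) := aux_grad_cont A B
  have hn : Measurable (sphN A B) :=
    Measurable.smul (hgrad.norm.measurable.inv) hgrad.measurable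
  have haff : Continuous fun y : E3 => s⁻¹ • R.symm (y - c) :=
    (R.symm.continuous.comp (continuous_id.sub continuous_const)).const_smul s⁻¹
  have hN : Measurable (partN A B c s R) :=
    R.continuous.measurable.comp (hn.comp haff.measurable)
  exact (hUc.measurable.inner hN).pow_const 2

lemma aux_norm_partN_le (A B : ℝ) (c : E3) (s : ℝ) (R : E3 ≃ₗᵢ[ℝ] E3) (y : E3) :
    ‖partN A B c s R y‖ ≤ 1 := by
  show ‖R (sphN A B (s⁻¹ • R.symm (y - c)))‖ ≤ 1
  rw [R.norm_map]
  show ‖‖sphGrad A B (s⁻¹ • R.symm (y - c))‖⁻¹ • sphGrad A B (s⁻¹ • R.symm (y - c))‖ ≤ 1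
  rw [norm_smul, norm_inv, norm_norm]
  rcases eq_or_ne ‖sphGrad A B (s⁻¹ • R.symm (y - c))‖ 0 with h | h
  · rw [h]; simp
  · rw [inv_mul_cancel₀ h]

/-- uniform energy bound via the boundary datum. There is `C > 0`
independent of `ε` such that for all sufficiently small `ε > 0` the restriction of the
boundary datum `U` to `Ω∖∪ᵢ𝒫ᵢ^ε` is admissible and satisfies `ℰ_ε[U] ≤ C`; consequently
any minimizer `u_ε` of `ℰ_ε` among admissible functions satisfies `ℰ_ε[u_ε] ≤ C`
uniformly in `ε`. -/
theorem stmt2 (cfg : Config) (U : E3 → E3) (hU : ContDiff ℝ 1 U) :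
    ∃ C : ℝ, 0 < C ∧ ∃ ε₁ : ℝ, 0 < ε₁ ∧ ε₁ ≤ cfg.ε₀ ∧
      ∀ ε : ℝ, 0 < ε → ε < ε₁ →
        cfg.Adm U ε U ∧ cfg.lcE ε U ≤ C ∧
        ∀ u : E3 → E3, cfg.Adm U ε u →
          (∀ v : E3 → E3, cfg.Adm U ε v → cfg.lcE ε u ≤ cfg.lcE ε v) →
          cfg.lcE ε u ≤ C := by
  classical
  have ha : 0 < cfg.a := cfg.hb.trans cfg.hba
  set K := closure cfg.Ω with hK
  have hKcomp : IsCompact K := cfg.hΩb.isCompact_closure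
  have hUc : Continuous U := hU.continuous
  obtain ⟨M, hM⟩ := hKcomp.exists_bound_of_continuousOn hUc.continuousOn
  obtain ⟨x₀, hx₀⟩ := cfg.hΩne
  have hM0 : 0 ≤ M := (norm_nonneg _).trans (hM x₀ (subset_closure hx₀))
  have hFc : Continuous fun x : E3 => ‖fderiv ℝ U x‖ ^ 2 + (1 - ‖U x‖ ^ 2) ^ 2 :=
    ((hU.continuous_fderiv one_ne_zero).norm.pow 2).add
      ((continuous_const.sub (hUc.norm.pow 2)).pow 2)
  obtain ⟨M₂, hM₂⟩ := hKcomp.exists_bound_of_continuousOn hFc.continuousOn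
  have hM₂0 : 0 ≤ M₂ := (norm_nonneg _).trans (hM₂ x₀ (subset_closure hx₀))
  set T := (μH[(2:ℝ)] (sphS cfg.b cfg.a)).toReal with hTdef
  have hT0 : 0 ≤ T := ENNReal.toReal_nonneg
  set Vol := (volume K).toReal with hVoldef
  have hVol0 : 0 ≤ Vol := ENNReal.toReal_nonneg
  set C := M₂ * Vol + |cfg.g| * cfg.NN * M ^ 2 * T + 1 with hCdef
  have hC : 0 < C := by
    have h1 : 0 ≤ M₂ * Vol := mul_nonneg hM₂0 hVol0
    have h2 : 0 ≤ |cfg.g| * cfg.NN * M ^ 2 * T :=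
      mul_nonneg (mul_nonneg (mul_nonneg (abs_nonneg _) cfg.hNN.le) (sq_nonneg M)) hT0
    linarith
  set r : ℝ := (cfg.d / (2 * cfg.a)) ^ ((cfg.α - 1)⁻¹) with hrdef
  have hr : 0 < r := Real.rpow_pos_of_pos (div_pos cfg.hd (by linarith)) _
  refine ⟨C, hC, min cfg.ε₀ r, lt_min cfg.hε₀ hr, min_le_left _ _, ?_⟩
  intro ε hε hεlt
  have hε₀ : ε < cfg.ε₀ := lt_of_lt_of_le hεlt (min_le_left _ _)
  have hεr : ε < r := lt_of_lt_of_le hεlt (min_le_right _ _)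
  have hsα : 0 < ε ^ cfg.α := Real.rpow_pos_of_pos hε _
  -- the smallness condition on ε
  have hkey : ε ^ cfg.α * cfg.a ≤ cfg.d * ε / 2 := by
    have hα1 : (0:ℝ) < cfg.α - 1 := by linarith [cfg.hα1]
    have h1 : ε ^ (cfg.α - 1) ≤ cfg.d / (2 * cfg.a) := by
      have h := Real.rpow_le_rpow hε.le hεr.le hα1.le
      rwa [hrdef, Real.rpow_inv_rpow (div_pos cfg.hd (by linarith)).le hα1.ne'] at h
    have h2 : ε ^ cfg.α = ε ^ (cfg.α - 1) * ε := by
      rw [← Real.rpow_add_one hε.ne' (cfg.α - 1)]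
      ring_nf
    rw [h2]
    have h3 : ε ^ (cfg.α - 1) * ε * cfg.a ≤ cfg.d / (2 * cfg.a) * ε * cfg.a :=
      mul_le_mul_of_nonneg_right (mul_le_mul_of_nonneg_right h1 hε.le) ha.le
    refine h3.trans (le_of_eq ?_)
    field_simp
  -- geometric inclusions
  have hpartΩ : ∀ i, cfg.particle ε i ⊆ cfg.Ω := by
    intro i
    refine subset_trans ?_ (cfg.hball ε hε hε₀ i)
    refine subset_trans (aux_part_subset cfg.hb cfg.hba _ hsα.le _) ?_
    exact Metric.closedBall_subset_closedBall hkey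
  have hsurfK : ∀ i, cfg.surf ε i ⊆ K := by
    intro i
    refine subset_trans ?_ ((hpartΩ i).trans subset_closure)
    exact Set.image_mono (aux_sphS_subset_sph cfg.b cfg.a)
  have hdomK : cfg.dom ε ⊆ K := Set.diff_subset.trans subset_closure
  -- admissibility of U
  have hUadm : cfg.Adm U ε U := by
    refine ⟨⟨hUc, fun x _ => (hU.differentiable one_ne_zero).differentiableAt, ?_, ?_⟩, ?_, fun x _ => rfl⟩
    · exact (ContinuousOn.integrableOn_compact hKcomp
        ((hUc.norm.pow 2).continuousOn)).mono_set hdomK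
    · exact (ContinuousOn.integrableOn_compact hKcomp
        (((hU.continuous_fderiv one_ne_zero).norm.pow 2).continuousOn)).mono_set hdomK
    · exact (ContinuousOn.integrableOn_compact hKcomp
        ((hUc.norm.pow 4).continuousOn)).mono_set hdomK
  -- bound on the bulk term
  have hvolfin : volume (cfg.dom ε) < ⊤ :=
    lt_of_le_of_lt (measure_mono hdomK) hKcomp.measure_lt_top
  have hI1 : (∫ x in cfg.dom ε, (‖fderiv ℝ U x‖ ^ 2 + (1 - ‖U x‖ ^ 2) ^ 2)) ≤ M₂ * Vol := by
    have hb := norm_setIntegral_le_of_norm_le_const hvolfin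
      (fun x hx => hM₂ x (hdomK hx))
    have h1 : (∫ x in cfg.dom ε, (‖fderiv ℝ U x‖ ^ 2 + (1 - ‖U x‖ ^ 2) ^ 2))
        ≤ ‖∫ x in cfg.dom ε, (‖fderiv ℝ U x‖ ^ 2 + (1 - ‖U x‖ ^ 2) ^ 2)‖ :=
      le_trans (le_abs_self _) (le_of_eq (Real.norm_eq_abs _).symm)
    refine (h1.trans hb).trans ?_
    exact mul_le_mul_of_nonneg_left
      (ENNReal.toReal_mono hKcomp.measure_lt_top.ne (measure_mono hdomK)) hM₂0
  -- bound on each surface integral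
  have hIi : ∀ i : Fin (cfg.Nε ε),
      (∫ y in cfg.surf ε i, ⟪U y, cfg.normal ε i y⟫ ^ 2 ∂μH[2])
        ≤ M ^ 2 * ((ε ^ cfg.α) ^ 2 * T) := by
    intro i
    have hfin : μH[(2:ℝ)] (cfg.surf ε i) < ⊤ :=
      aux_partS_fin cfg.hb cfg.hba _ hsα.le _
    have hbnd : ∀ y ∈ cfg.surf ε i, ‖(⟪U y, cfg.normal ε i y⟫ : ℝ) ^ 2‖ ≤ M ^ 2 := by
      intro y hy
      have h1 : |(⟪U y, cfg.normal ε i y⟫ : ℝ)| ≤ M * 1 := by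
        calc |(⟪U y, cfg.normal ε i y⟫ : ℝ)| ≤ ‖U y‖ * ‖cfg.normal ε i y‖ :=
              abs_real_inner_le_norm _ _
          _ ≤ M * 1 := mul_le_mul (hM y (hsurfK i hy))
              (aux_norm_partN_le cfg.b cfg.a _ _ _ y) (norm_nonneg _) hM0
      have h2 : ‖(⟪U y, cfg.normal ε i y⟫ : ℝ) ^ 2‖
          = |(⟪U y, cfg.normal ε i y⟫ : ℝ)| ^ 2 := by
        rw [Real.norm_eq_abs, abs_pow]
      rw [h2]
      calc |(⟪U y, cfg.normal ε i y⟫ : ℝ)| ^ 2 ≤ (M * 1) ^ 2 :=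
            pow_le_pow_left₀ (abs_nonneg _) h1 2
        _ = M ^ 2 := by ring
    have hmeas : AEStronglyMeasurable (fun y => (⟪U y, cfg.normal ε i y⟫ : ℝ) ^ 2)
        (μH[(2:ℝ)].restrict (cfg.surf ε i)) :=
      (aux_meas_integrand cfg.b cfg.a _ _ _ U hUc).aestronglyMeasurable.restrict
    have hb := norm_setIntegral_le_of_norm_le_const hfin hbnd
    have h1 : (∫ y in cfg.surf ε i, ⟪U y, cfg.normal ε i y⟫ ^ 2 ∂μH[2])
        ≤ ‖∫ y in cfg.surf ε i, ⟪U y, cfg.normal ε i y⟫ ^ 2 ∂μH[2]‖ :=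
      le_trans (le_abs_self _) (le_of_eq (Real.norm_eq_abs _).symm)
    refine (h1.trans hb).trans ?_
    exact mul_le_mul_of_nonneg_left
      (aux_partS_toReal_le cfg.hb cfg.hba _ hsα.le _) (sq_nonneg M)
  -- bound on the surface energy
  have hS0 : 0 ≤ ∑ i : Fin (cfg.Nε ε),
      ∫ y in cfg.surf ε i, ⟪U y, cfg.normal ε i y⟫ ^ 2 ∂μH[2] :=
    Finset.sum_nonneg fun i _ => integral_nonneg fun y => sq_nonneg _
  have hSle : (∑ i : Fin (cfg.Nε ε), ∫ y in cfg.surf ε i, ⟪U y, cfg.normal ε i y⟫ ^ 2 ∂μH[2])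
      ≤ (cfg.Nε ε : ℝ) * (M ^ 2 * ((ε ^ cfg.α) ^ 2 * T)) := by
    have h := Finset.sum_le_card_nsmul Finset.univ
      (fun i => ∫ y in cfg.surf ε i, ⟪U y, cfg.normal ε i y⟫ ^ 2 ∂μH[2])
      (M ^ 2 * ((ε ^ cfg.α) ^ 2 * T)) (fun i _ => hIi i)
    simpa [Finset.card_univ, nsmul_eq_mul] using h
  have hone : ε ^ (3 - 2 * cfg.α) * (ε ^ cfg.α) ^ 2 * ε⁻¹ ^ 3 = 1 := by
    have h2 : (ε ^ cfg.α) ^ 2 = ε ^ (cfg.α * 2) := by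
      rw [← Real.rpow_natCast (ε ^ cfg.α) 2, ← Real.rpow_mul hε.le]
      norm_num
    have h3 : ε ^ (3 - 2 * cfg.α) * ε ^ (cfg.α * 2) = ε ^ (3:ℝ) := by
      rw [← Real.rpow_add hε]
      congr 1
      ring
    have h4 : ε ^ (3:ℝ) = ε ^ (3:ℕ) := by
      rw [← Real.rpow_natCast ε 3]
      norm_num
    rw [h2, h3, h4, inv_pow]
    exact mul_inv_cancel₀ (pow_ne_zero 3 hε.ne')
  have hX0 : 0 < ε ^ (3 - 2 * cfg.α) := Real.rpow_pos_of_pos hε _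
  have hsurfE : cfg.surfE ε U ≤ |cfg.g| * cfg.NN * M ^ 2 * T := by
    show cfg.g * ε ^ (3 - 2 * cfg.α) * _ ≤ _
    calc cfg.g * ε ^ (3 - 2 * cfg.α) *
          (∑ i : Fin (cfg.Nε ε), ∫ y in cfg.surf ε i, ⟪U y, cfg.normal ε i y⟫ ^ 2 ∂μH[2])
        ≤ |cfg.g| * ε ^ (3 - 2 * cfg.α) *
          (∑ i : Fin (cfg.Nε ε), ∫ y in cfg.surf ε i, ⟪U y, cfg.normal ε i y⟫ ^ 2 ∂μH[2]) := by
          exact mul_le_mul_of_nonneg_right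
            (mul_le_mul_of_nonneg_right (le_abs_self _) hX0.le) hS0
      _ ≤ |cfg.g| * ε ^ (3 - 2 * cfg.α) *
          ((cfg.NN * ε⁻¹ ^ 3) * (M ^ 2 * ((ε ^ cfg.α) ^ 2 * T))) := by
          refine mul_le_mul_of_nonneg_left ?_ (mul_nonneg (abs_nonneg _) hX0.le)
          refine hSle.trans ?_
          exact mul_le_mul_of_nonneg_right (cfg.hcount ε hε hε₀)
            (mul_nonneg (sq_nonneg M) (mul_nonneg (sq_nonneg _) hT0))
      _ = |cfg.g| * cfg.NN * M ^ 2 * T * (ε ^ (3 - 2 * cfg.α) * (ε ^ cfg.α) ^ 2 * ε⁻¹ ^ 3) := by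
          ring
      _ = |cfg.g| * cfg.NN * M ^ 2 * T := by rw [hone, mul_one]
  -- total energy bound
  have hlcE : cfg.lcE ε U ≤ C := by
    show (∫ x in cfg.dom ε, (‖fderiv ℝ U x‖ ^ 2 + (1 - ‖U x‖ ^ 2) ^ 2)) + cfg.surfE ε U ≤ C
    rw [hCdef]
    linarith
  exact ⟨hUadm, hlcE, fun u hu hmin => (hmin U hUadm).trans hlcE⟩
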